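/- Let γ ∈ [0, 1/4), μ ∈ (γ, 1/2−γ), and ε > 0. Then there exists a constant C = C(γ, μ, ε) > 0 such that for every sequence a : ℤ → ℝ one has ∑_{m∈ℤ} ⟨m⟩^{2(μ−1)} ∑_{k∈ℤ} ⟨k⟩^{2γ} a(k−m)² ≤ ε·∑_{k∈ℤ} ⟨k⟩^{2μ} a(k)² + C·∑_{k∈ℤ} ⟨k⟩^{2(μ−1)} a(k)², where all sums of nonnegative terms are taken in [0,∞]. -/

import Mathlib

open Real
open scoped ENNReal

lemma sumA (s : ℝ) (hs : s < -(1/2)) : Summable (fun m : ℤ => (1 + (m:ℝ)^2) ^ s) := by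
  have key : Summable (fun n : ℕ => (1 + (n:ℝ)^2) ^ s) := by
    have h1 : Summable (fun n : ℕ => ((n:ℝ)+1) ^ (2*s)) := by
      have := (summable_nat_add_iff (f := fun n : ℕ => (n:ℝ) ^ (2*s)) 1).2
        (Real.summable_nat_rpow.2 (by linarith))
      simpa using this
    refine Summable.of_nonneg_of_le (fun n => Real.rpow_nonneg (by positivity) s)
      (fun n => ?_) (h1.div_const ((2:ℝ) ^ s))
    have hb : (0:ℝ) < (((n:ℝ)+1)^2) / 2 := by positivity
    have hle : (((n:ℝ)+1)^2) / 2 ≤ 1 + (n:ℝ)^2 := by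
      have : (0:ℝ) ≤ (n:ℝ) := n.cast_nonneg
      nlinarith [sq_nonneg ((n:ℝ)-1)]
    have h2 := Real.rpow_le_rpow_of_nonpos hb hle (by linarith : s ≤ 0)
    calc (1 + (n:ℝ)^2) ^ s ≤ ((((n:ℝ)+1)^2) / 2) ^ s := h2
      _ = ((n:ℝ)+1) ^ (2*s) / (2:ℝ)^s := by
          rw [Real.div_rpow (by positivity) (by norm_num)]
          congr 1
          rw [← Real.rpow_natCast ((n:ℝ)+1) 2, ← Real.rpow_mul (by positivity)]
          norm_num
  refine Summable.of_nat_of_neg key ?_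
  convert key using 2 with n
  push_cast
  · rfl
  · push_cast
    ring_nf

lemma cross (γ : ℝ) (hγ0 : 0 ≤ γ) (n m : ℤ) :
    (1 + ((n+m : ℤ):ℝ)^2)^γ ≤ 2^γ * (1+(n:ℝ)^2)^γ * (1+(m:ℝ)^2)^γ := by
  have h1 : (1 + ((n+m : ℤ):ℝ)^2) ≤ 2 * (1+(n:ℝ)^2) * (1+(m:ℝ)^2) := by
    push_cast; nlinarith [sq_nonneg ((n:ℝ) - m), sq_nonneg ((n:ℝ)*m)]
  calc (1 + ((n+m : ℤ):ℝ)^2)^γ ≤ (2 * (1+(n:ℝ)^2) * (1+(m:ℝ)^2))^γ :=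
        Real.rpow_le_rpow (by positivity) h1 hγ0
    _ = 2^γ * (1+(n:ℝ)^2)^γ * (1+(m:ℝ)^2)^γ := by
        rw [Real.mul_rpow (by positivity) (by positivity),
          Real.mul_rpow (by norm_num) (by positivity)]

lemma interp (γ μ e : ℝ) (hγ0 : 0 ≤ γ) (hμ0 : γ < μ) (hμ1 : μ < 1) (he : 0 < e) :
    ∃ C' : ℝ, 0 < C' ∧ ∀ x : ℝ, 1 ≤ x → x^γ ≤ e * x^μ + C' * x^(μ-1) := by
  set T : ℝ := max 1 ((1/e) ^ (1/(μ-γ))) with hT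
  have hT1 : (1:ℝ) ≤ T := le_max_left _ _
  have hTpos : 0 < T := lt_of_lt_of_le one_pos hT1
  refine ⟨T ^ (γ + 1 - μ), Real.rpow_pos_of_pos hTpos _, fun x hx => ?_⟩
  have hxpos : (0:ℝ) < x := lt_of_lt_of_le one_pos hx
  by_cases hcase : T ≤ x
  · have hb : (0:ℝ) < (1/e) ^ (1/(μ-γ)) := Real.rpow_pos_of_pos (by positivity) _
    have h2 : x ^ (γ - μ) ≤ ((1/e) ^ (1/(μ-γ))) ^ (γ - μ) :=
      Real.rpow_le_rpow_of_nonpos hb (le_trans (le_max_right _ _) hcase) (by linarith)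
    have h3 : ((1/e) ^ (1/(μ-γ))) ^ (γ - μ) = e := by
      rw [← Real.rpow_mul (by positivity)]
      have hne : μ - γ ≠ 0 := by linarith
      have : 1/(μ-γ) * (γ - μ) = -1 := by field_simp; ring
      rw [this, Real.rpow_neg_one, one_div, inv_inv]
    have h4 : x ^ γ = x ^ (γ - μ) * x ^ μ := by
      have h := (Real.rpow_add hxpos (γ - μ) μ).symm
      have he2 : γ - μ + μ = γ := by ring
      rw [he2] at h; exact h.symm
    have h5 : x ^ γ ≤ e * x ^ μ := by
      rw [h4]
      exact mul_le_mul_of_nonneg_right (h3 ▸ h2) (Real.rpow_nonneg hxpos.le _)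
    have : (0:ℝ) ≤ T ^ (γ + 1 - μ) * x ^ (μ-1) := by positivity
    linarith
  · push_neg at hcase
    have h2 : x ^ (γ + 1 - μ) ≤ T ^ (γ + 1 - μ) :=
      Real.rpow_le_rpow hxpos.le hcase.le (by linarith)
    have h4 : x ^ γ = x ^ (γ + 1 - μ) * x ^ (μ - 1) := by
      have h := (Real.rpow_add hxpos (γ + 1 - μ) (μ - 1)).symm
      have he2 : γ + 1 - μ + (μ - 1) = γ := by ring
      rw [he2] at h; exact h.symm
    have h5 : x ^ γ ≤ T ^ (γ + 1 - μ) * x ^ (μ - 1) := by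
      rw [h4]
      exact mul_le_mul_of_nonneg_right h2 (Real.rpow_nonneg hxpos.le _)
    have : (0:ℝ) ≤ e * x ^ μ := by positivity
    linarith



/-- Combined key bound and interpolation (Remark 1.5 of the paper): for
`γ ∈ [0,1/4)`, `μ ∈ (γ, 1/2−γ)`, `ε > 0` there is `C > 0` with
`∑_m ⟨m⟩^{2(μ−1)} ∑_k ⟨k⟩^{2γ} a(k−m)² ≤ ε ∑ ⟨k⟩^{2μ} a(k)² + C ∑ ⟨k⟩^{2(μ−1)} a(k)²`. -/
theorem stmt17 (γ μ ε : ℝ) (hγ0 : 0 ≤ γ) (hγ1 : γ < 1 / 4)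
    (hμ0 : γ < μ) (hμ1 : μ < 1 / 2 - γ) (hε : 0 < ε) :
    ∃ C : ℝ, 0 < C ∧ ∀ a : ℤ → ℝ,
      ∑' m : ℤ, ∑' k : ℤ,
          ENNReal.ofReal
            ((1 + (m : ℝ) ^ 2) ^ (μ - 1) * ((1 + (k : ℝ) ^ 2) ^ γ * a (k - m) ^ 2))
        ≤ ENNReal.ofReal ε * ∑' k : ℤ, ENNReal.ofReal ((1 + (k : ℝ) ^ 2) ^ μ * a k ^ 2)
          + ENNReal.ofReal C *
              ∑' k : ℤ, ENNReal.ofReal ((1 + (k : ℝ) ^ 2) ^ (μ - 1) * a k ^ 2) := by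
  set s : ℝ := μ - 1 + γ with hsdef
  have hs : s < -(1/2) := by simp only [hsdef]; linarith
  set c : ℤ → ℝ := fun m => 2^γ * (1 + (m:ℝ)^2) ^ s with hc
  have hcsum : Summable c := (sumA s hs).mul_left _
  have hcnonneg : ∀ m, 0 ≤ c m := fun m => by positivity
  set K : ℝ := ∑' m : ℤ, c m with hK
  have hKpos : 0 < K := Summable.tsum_pos hcsum hcnonneg 0 (by positivity)
  have he : 0 < ε / K := div_pos hε hKpos
  obtain ⟨C', hC'pos, hC'⟩ := interp γ μ (ε / K) hγ0 hμ0 (by linarith) he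
  refine ⟨K * C', mul_pos hKpos hC'pos, fun a => ?_⟩
  set A : ℝ≥0∞ := ∑' k : ℤ, ENNReal.ofReal ((1 + (k : ℝ) ^ 2) ^ μ * a k ^ 2) with hA
  set B : ℝ≥0∞ := ∑' k : ℤ, ENNReal.ofReal ((1 + (k : ℝ) ^ 2) ^ (μ - 1) * a k ^ 2) with hB
  set d : ℤ → ℝ := fun n => (1 + (n:ℝ)^2) ^ γ * a n ^ 2 with hd
  -- inner reindex and pointwise bound
  have step1 : ∀ m : ℤ,
      (∑' k : ℤ, ENNReal.ofReal
          ((1 + (m : ℝ) ^ 2) ^ (μ - 1) * ((1 + (k : ℝ) ^ 2) ^ γ * a (k - m) ^ 2)))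
        ≤ ENNReal.ofReal (c m) * ∑' n : ℤ, ENNReal.ofReal (d n) := by
    intro m
    have hre := (Equiv.addRight m).tsum_eq (fun k : ℤ => ENNReal.ofReal
        ((1 + (k : ℝ) ^ 2) ^ (μ - 1 + 0) * ((1 + (k : ℝ) ^ 2) ^ γ * a (k - m) ^ 2)))
    -- do reindexing directly
    have hre2 : (∑' k : ℤ, ENNReal.ofReal
          ((1 + (m : ℝ) ^ 2) ^ (μ - 1) * ((1 + (k : ℝ) ^ 2) ^ γ * a (k - m) ^ 2)))
        = ∑' n : ℤ, ENNReal.ofReal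
          ((1 + (m : ℝ) ^ 2) ^ (μ - 1) * ((1 + ((n + m : ℤ) : ℝ) ^ 2) ^ γ * a n ^ 2)) := by
      rw [← (Equiv.addRight m).tsum_eq (fun k : ℤ => ENNReal.ofReal
        ((1 + (m : ℝ) ^ 2) ^ (μ - 1) * ((1 + (k : ℝ) ^ 2) ^ γ * a (k - m) ^ 2)))]
      simp [Equiv.coe_addRight, add_sub_cancel_right]
    rw [hre2, ← ENNReal.tsum_mul_left]
    refine ENNReal.tsum_le_tsum fun n => ?_
    rw [← ENNReal.ofReal_mul (hcnonneg m)]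
    refine ENNReal.ofReal_le_ofReal ?_
    have hcr := cross γ hγ0 n m
    have hmul := mul_le_mul_of_nonneg_left
      (mul_le_mul_of_nonneg_right hcr (sq_nonneg (a n)))
      (Real.rpow_nonneg (by positivity : (0:ℝ) ≤ 1 + (m:ℝ)^2) (μ - 1))
    have hsplit : (1 + (m:ℝ)^2) ^ s = (1 + (m:ℝ)^2) ^ (μ - 1) * (1 + (m:ℝ)^2) ^ γ := by
      rw [hsdef, Real.rpow_add (by positivity)]
    calc (1 + (m : ℝ) ^ 2) ^ (μ - 1) * ((1 + ((n + m : ℤ) : ℝ) ^ 2) ^ γ * a n ^ 2)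
        ≤ (1 + (m:ℝ)^2) ^ (μ - 1) * ((2^γ * (1+(n:ℝ)^2)^γ * (1+(m:ℝ)^2)^γ) * a n ^ 2) := hmul
      _ = c m * d n := by rw [hc, hd]; simp only []; rw [hsplit]; ring
  -- sum over m
  have step2 : (∑' m : ℤ, ∑' k : ℤ, ENNReal.ofReal
        ((1 + (m : ℝ) ^ 2) ^ (μ - 1) * ((1 + (k : ℝ) ^ 2) ^ γ * a (k - m) ^ 2)))
      ≤ ENNReal.ofReal K * ∑' n : ℤ, ENNReal.ofReal (d n) := by
    calc (∑' m : ℤ, ∑' k : ℤ, ENNReal.ofReal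
          ((1 + (m : ℝ) ^ 2) ^ (μ - 1) * ((1 + (k : ℝ) ^ 2) ^ γ * a (k - m) ^ 2)))
        ≤ ∑' m : ℤ, ENNReal.ofReal (c m) * ∑' n : ℤ, ENNReal.ofReal (d n) :=
          ENNReal.tsum_le_tsum step1
      _ = (∑' m : ℤ, ENNReal.ofReal (c m)) * ∑' n : ℤ, ENNReal.ofReal (d n) :=
          ENNReal.tsum_mul_right
      _ = ENNReal.ofReal K * ∑' n : ℤ, ENNReal.ofReal (d n) := by
          rw [hK, ENNReal.ofReal_tsum_of_nonneg hcnonneg hcsum]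
  -- interpolation on D
  have step3 : (∑' n : ℤ, ENNReal.ofReal (d n))
      ≤ ENNReal.ofReal (ε / K) * A + ENNReal.ofReal C' * B := by
    have hpt : ∀ n : ℤ, ENNReal.ofReal (d n)
        ≤ ENNReal.ofReal (ε / K * ((1 + (n:ℝ)^2) ^ μ * a n ^ 2))
          + ENNReal.ofReal (C' * ((1 + (n:ℝ)^2) ^ (μ-1) * a n ^ 2)) := by
      intro n
      refine le_trans (ENNReal.ofReal_le_ofReal ?_) (ENNReal.ofReal_add_le)
      have hx : (1:ℝ) ≤ 1 + (n:ℝ)^2 := by nlinarith [sq_nonneg ((n:ℝ))]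
      have := mul_le_mul_of_nonneg_right (hC' _ hx) (sq_nonneg (a n))
      calc d n = (1 + (n:ℝ)^2) ^ γ * a n ^ 2 := rfl
        _ ≤ (ε/K * (1 + (n:ℝ)^2) ^ μ + C' * (1 + (n:ℝ)^2) ^ (μ-1)) * a n ^ 2 := this
        _ = ε / K * ((1 + (n:ℝ)^2) ^ μ * a n ^ 2)
            + C' * ((1 + (n:ℝ)^2) ^ (μ-1) * a n ^ 2) := by ring
    calc (∑' n : ℤ, ENNReal.ofReal (d n))
        ≤ ∑' n : ℤ, (ENNReal.ofReal (ε / K * ((1 + (n:ℝ)^2) ^ μ * a n ^ 2))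
            + ENNReal.ofReal (C' * ((1 + (n:ℝ)^2) ^ (μ-1) * a n ^ 2))) :=
          ENNReal.tsum_le_tsum hpt
      _ = (∑' n : ℤ, ENNReal.ofReal (ε / K * ((1 + (n:ℝ)^2) ^ μ * a n ^ 2)))
            + ∑' n : ℤ, ENNReal.ofReal (C' * ((1 + (n:ℝ)^2) ^ (μ-1) * a n ^ 2)) :=
          ENNReal.tsum_add
      _ = ENNReal.ofReal (ε / K) * A + ENNReal.ofReal C' * B := by
          rw [hA, hB]
          congr 1
          · rw [← ENNReal.tsum_mul_left]
            congr 1; funext n; rw [← ENNReal.ofReal_mul he.le]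
          · rw [← ENNReal.tsum_mul_left]
            congr 1; funext n; rw [← ENNReal.ofReal_mul hC'pos.le]
  refine le_trans step2 (le_trans (mul_le_mul_right step3 _) ?_)
  rw [mul_add, ← mul_assoc, ← mul_assoc, ← ENNReal.ofReal_mul hKpos.le,
    ← ENNReal.ofReal_mul hKpos.le]
  have : K * (ε / K) = ε := by field_simp
  rw [this]
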